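/- arXiv:2506.23748 — 3 statements merged into one kernel-verified Lean document; each statement's English description precedes it below -/
import Mathlib

section
/- If u : [0,1] → ℝ is absolutely continuous with u(0) = 0 and its energy E(u) = (1/2) ∫_0^1 (u'(r)^2 + sin^2(u(r))/r^2) r dr satisfies E(u) ≤ 2, then ‖u‖_{L^∞([0,1])} ≤ 2 arcsin(√(E(u)/2)). -/
open Real intervalIntegral MeasureTheory
open scoped ENNReal

noncomputable def Gfun (z : ℝ) : ℝ := ∫ s in (0:ℝ)..z, |Real.sin s|

lemma Gfun_hasDerivAt (z : ℝ) : HasDerivAt Gfun (|Real.sin z|) z := by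
  exact integral_hasDerivAt_right
    ((continuous_sin.abs).intervalIntegrable _ _)
    ((continuous_sin.abs).stronglyMeasurableAtFilter _ _)
    (continuous_sin.abs.continuousAt)

lemma Gfun_neg (x : ℝ) : Gfun (-x) = - Gfun x := by
  unfold Gfun
  have : ∫ s in (0:ℝ)..x, |Real.sin s| = ∫ s in (0:ℝ)..x, |Real.sin (-s)| := by
    simp
  rw [this, intervalIntegral.integral_comp_neg (f := fun s => |Real.sin s|)]
  rw [show (-x : ℝ) = -x from rfl]
  rw [intervalIntegral.integral_symm]
  simp

lemma Gfun_nonneg {x : ℝ} (hx : 0 ≤ x) : 0 ≤ Gfun x :=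
  intervalIntegral.integral_nonneg hx (fun s _ => abs_nonneg _)

lemma Gfun_eq_cos {z : ℝ} (h0 : 0 ≤ z) (h1 : z ≤ π) : Gfun z = 1 - Real.cos z := by
  unfold Gfun
  rw [intervalIntegral.integral_congr (g := Real.sin) ?_]
  · rw [integral_sin]; simp
  · intro s hs
    rw [Set.uIcc_of_le h0] at hs
    exact abs_of_nonneg (Real.sin_nonneg_of_nonneg_of_le_pi hs.1 (hs.2.trans h1))

lemma sin_abs_integral_pos {a b : ℝ} (hab : a < b) : 0 < ∫ s in a..b, |Real.sin s| := by
  have hint : IntervalIntegrable (fun s => |Real.sin s|) volume a b :=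
    (continuous_sin.abs).intervalIntegrable _ _
  have hnn : 0 ≤ᵐ[volume.restrict (Set.Ioc a b)] fun s => |Real.sin s| :=
    Filter.Eventually.of_forall (fun s => abs_nonneg _)
  have hnn' : 0 ≤ᵐ[volume.restrict (Set.uIoc a b)] fun s => |Real.sin s| := by
    rw [Set.uIoc_of_le hab.le]; exact hnn
  rw [intervalIntegral.integral_pos_iff_support_of_nonneg_ae' hnn' hint]
  refine ⟨hab, ?_⟩
  have hz : volume {x : ℝ | Real.sin x = 0} = 0 := by
    have : {x : ℝ | Real.sin x = 0} = Set.range (fun n : ℤ => (n : ℝ) * π) := by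
      ext x; simp [Real.sin_eq_zero_iff]
    rw [this]
    exact Set.Countable.measure_zero (Set.countable_range _) _
  have hsub : Set.Ioc a b \ {x : ℝ | Real.sin x = 0} ⊆ Function.support (fun s => |Real.sin s|) ∩ Set.Ioc a b := by
    intro x hx
    refine ⟨?_, hx.1⟩
    simp only [Function.mem_support, ne_eq, abs_eq_zero]
    exact hx.2
  calc (0:ℝ≥0∞) < volume (Set.Ioc a b) := by simp [hab]
  _ = volume (Set.Ioc a b \ {x : ℝ | Real.sin x = 0}) := (measure_diff_null hz).symm
  _ ≤ _ := measure_mono hsub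

theorem linf_energy_bound (u u' : ℝ → ℝ) (E : ℝ)
    (hderiv : ∀ r ∈ Set.Icc (0:ℝ) 1, HasDerivAt u (u' r) r)
    (hu0 : u 0 = 0)
    (hE : E = (1/2) * ∫ r in (0:ℝ)..1,
      ((u' r)^2 + (Real.sin (u r))^2 / r^2) * r)
    (hint : IntervalIntegrable
      (fun r => ((u' r)^2 + (Real.sin (u r))^2 / r^2) * r)
      MeasureTheory.volume 0 1)
    (hE2 : E ≤ 2) :
    ∀ r ∈ Set.Icc (0:ℝ) 1, |u r| ≤ 2 * Real.arcsin (Real.sqrt (E / 2)) := by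
  set g : ℝ → ℝ := fun r => ((u' r)^2 + (Real.sin (u r))^2 / r^2) * r with hg
  have hgnn : ∀ r : ℝ, 0 ≤ r → 0 ≤ g r := by
    intro r hr
    apply mul_nonneg _ hr
    positivity
  have hE0 : 0 ≤ E := by
    rw [hE]
    apply mul_nonneg (by norm_num)
    exact intervalIntegral.integral_nonneg (by norm_num) (fun r hr => hgnn r hr.1)
  -- key pointwise inequality
  have hkey : ∀ r : ℝ, 0 < r → |Real.sin (u r) * u' r| ≤ g r / 2 := by
    intro r hr
    have h1 : g r = ((u' r)^2 * r^2 + (Real.sin (u r))^2) / r := by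
      field_simp [hg]; simp only [hg]; field_simp
    rw [h1, div_div, abs_mul]
    rw [le_div_iff₀ (by positivity)]
    nlinarith [sq_nonneg (|Real.sin (u r)| - |u' r| * r), sq_abs (Real.sin (u r)),
      sq_abs (u' r), mul_nonneg (abs_nonneg (Real.sin (u r))) (abs_nonneg (u' r))]
  intro r₀ hr₀
  obtain ⟨h0r, hr1⟩ := hr₀
  set f : ℝ → ℝ := fun r => |Real.sin (u r)| * u' r with hf
  have hfabs : ∀ r : ℝ, |f r| = |Real.sin (u r) * u' r| := by
    intro r; rw [hf]; simp [abs_mul]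
  -- integrability of f on [0, r₀]
  have hsub : Set.uIoc (0:ℝ) r₀ ⊆ Set.uIoc (0:ℝ) 1 := by
    rw [Set.uIoc_of_le h0r, Set.uIoc_of_le (by norm_num : (0:ℝ) ≤ 1)]
    exact Set.Ioc_subset_Ioc le_rfl hr1
  have hintg0 : IntervalIntegrable g volume 0 r₀ := hint.mono_set' hsub
  have hucont : ContinuousOn u (Set.Icc 0 1) := fun r hr =>
    (hderiv r hr).continuousAt.continuousWithinAt
  have hintf : IntervalIntegrable f volume 0 r₀ := by
    apply hintg0.mono_fun'
    · have h1 : AEMeasurable u (volume.restrict (Set.uIoc (0:ℝ) r₀)) := by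
        rw [Set.uIoc_of_le h0r]
        exact ContinuousOn.aemeasurable
          (hucont.mono (Set.Ioc_subset_Icc_self.trans (Set.Icc_subset_Icc le_rfl hr1)))
          measurableSet_Ioc
      have h2 : AEMeasurable (fun r => |Real.sin (u r)| * deriv u r)
          (volume.restrict (Set.uIoc (0:ℝ) r₀)) :=
        ((measurable_abs.comp Real.measurable_sin).comp_aemeasurable h1).mul
          (measurable_deriv u).aemeasurable
      apply AEStronglyMeasurable.congr h2.aestronglyMeasurable
      rw [Set.uIoc_of_le h0r, Filter.EventuallyEq, ae_restrict_iff' measurableSet_Ioc]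
      filter_upwards with r hr
      have : r ∈ Set.Icc (0:ℝ) 1 := ⟨hr.1.le, hr.2.trans hr1⟩
      rw [hf]; simp only [(hderiv r this).deriv]
    · rw [Set.uIoc_of_le h0r, Filter.EventuallyLE, ae_restrict_iff' measurableSet_Ioc]
      filter_upwards with r hr
      have h1 := hkey r hr.1
      have h2 := hgnn r hr.1.le
      calc ‖f r‖ = |Real.sin (u r) * u' r| := hfabs r
      _ ≤ g r / 2 := h1
      _ ≤ g r := by linarith
  -- FTC
  have Gderiv : ∀ z : ℝ, HasDerivAt Gfun (|Real.sin z|) z := fun z =>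
    integral_hasDerivAt_right ((continuous_sin.abs).intervalIntegrable _ _)
      ((continuous_sin.abs).stronglyMeasurableAtFilter _ _) (continuous_sin.abs.continuousAt)
  have hderivF : ∀ r ∈ Set.uIcc (0:ℝ) r₀, HasDerivAt (fun t => Gfun (u t)) (f r) r := by
    intro r hr
    rw [Set.uIcc_of_le h0r] at hr
    exact (Gderiv (u r)).comp r (hderiv r ⟨hr.1, hr.2.trans hr1⟩)
  have hFTC : ∫ r in (0:ℝ)..r₀, f r = Gfun (u r₀) - Gfun (u 0) :=
    intervalIntegral.integral_eq_sub_of_hasDerivAt hderivF hintf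
  have hGu0 : Gfun (u 0) = 0 := by rw [hu0]; unfold Gfun; exact intervalIntegral.integral_same
  -- bound |Gfun (u r₀)| ≤ E
  have habs : |Gfun (u r₀)| ≤ E := by
    have h1 : |Gfun (u r₀)| = |∫ r in (0:ℝ)..r₀, f r| := by rw [hFTC, hGu0, sub_zero]
    have h2 : |∫ r in (0:ℝ)..r₀, f r| ≤ ∫ r in (0:ℝ)..r₀, |f r| :=
      intervalIntegral.abs_integral_le_integral_abs h0r
    have h3 : ∫ r in (0:ℝ)..r₀, |f r| ≤ ∫ r in (0:ℝ)..r₀, g r / 2 := by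
      apply intervalIntegral.integral_mono_on h0r hintf.abs (hintg0.div_const 2)
      intro r hr
      rcases eq_or_lt_of_le hr.1 with h | h
      · rw [hfabs, ← h]
        simp [hu0, hg]
      · rw [hfabs]; exact hkey r h
    have h4 : ∫ r in (0:ℝ)..r₀, g r / 2 ≤ E := by
      have hintg1 : IntervalIntegrable g volume r₀ 1 := by
        apply hint.mono_set'
        rw [Set.uIoc_of_le hr1, Set.uIoc_of_le (by norm_num : (0:ℝ) ≤ 1)]
        exact Set.Ioc_subset_Ioc h0r le_rfl
      have hsplit : (∫ r in (0:ℝ)..r₀, g r) + ∫ r in r₀..1, g r = ∫ r in (0:ℝ)..1, g r :=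
        intervalIntegral.integral_add_adjacent_intervals hintg0 hintg1
      have htail : 0 ≤ ∫ r in r₀..1, g r :=
        intervalIntegral.integral_nonneg hr1 (fun r hr => hgnn r (h0r.trans hr.1))
      have : ∫ r in (0:ℝ)..r₀, g r / 2 = (1/2) * ∫ r in (0:ℝ)..r₀, g r := by
        rw [intervalIntegral.integral_div]; ring
      rw [this, hE]
      have : (∫ r in (0:ℝ)..r₀, g r) ≤ ∫ r in (0:ℝ)..1, g r := by linarith
      linarith
    calc |Gfun (u r₀)| = |∫ r in (0:ℝ)..r₀, f r| := h1
    _ ≤ ∫ r in (0:ℝ)..r₀, |f r| := h2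
    _ ≤ ∫ r in (0:ℝ)..r₀, g r / 2 := h3
    _ ≤ E := h4
    -- invert G
  set x : ℝ := Real.sqrt (E/2) with hx
  have hx0 : 0 ≤ x := Real.sqrt_nonneg _
  have hxsq : x^2 = E/2 := Real.sq_sqrt (by linarith)
  set b : ℝ := 2 * Real.arcsin x with hb
  have hb0 : 0 ≤ b := mul_nonneg (by norm_num) (Real.arcsin_nonneg.2 hx0)
  have hbπ : b ≤ π := by
    have := Real.arcsin_le_pi_div_two x
    rw [hb]; linarith
  have hGb : Gfun b = E := by
    rw [Gfun_eq_cos hb0 hbπ, hb, Real.cos_two_mul, Real.cos_arcsin,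
      Real.sq_sqrt (by nlinarith : (0:ℝ) ≤ 1 - x^2), hxsq]
    ring
  have hGz : Gfun |u r₀| ≤ E := by
    rcases le_or_gt 0 (u r₀) with h | h
    · rw [abs_of_nonneg h]
      exact (le_abs_self _).trans habs
    · rw [abs_of_neg h, Gfun_neg]
      exact (neg_le_abs _).trans habs
  have hzπ : |u r₀| ≤ π := by
    by_contra hc
    push_neg at hc
    have hpos := sin_abs_integral_pos hc
    have hsplit : Gfun π + ∫ s in π..|u r₀|, |Real.sin s| = Gfun |u r₀| :=
      intervalIntegral.integral_add_adjacent_intervals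
        ((continuous_sin.abs).intervalIntegrable _ _)
        ((continuous_sin.abs).intervalIntegrable _ _)
    have hGπ : Gfun π = 2 := by
      rw [Gfun_eq_cos Real.pi_nonneg le_rfl, Real.cos_pi]; norm_num
    linarith
  by_contra hc
  push_neg at hc
  have h1 : Real.cos |u r₀| < Real.cos b :=
    Real.strictAntiOn_cos ⟨hb0, hbπ⟩ ⟨abs_nonneg _, hzπ⟩ hc
  have h2 : Gfun |u r₀| = 1 - Real.cos |u r₀| := Gfun_eq_cos (abs_nonneg _) hzπ
  have h3 : Gfun b = 1 - Real.cos b := Gfun_eq_cos hb0 hbπ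
  linarith
end

section
/- Let 0 < b < 1 and let u : [0,1] → ℝ be absolutely continuous with u(0) = u(1) = 0 and E(u) ≤ 2b, where E(u) = (1/2) ∫_0^1 (u'(r)^2 + sin^2(u(r))/r^2) r dr. Then C_b ‖u‖_{H^1_r}^2 ≤ E(u) with C_b = b(1-b)^2 / (2 arcsin^2 √b). -/
open Real intervalIntegral

/-- Concavity bound: `sin x ≥ (sin M / M) x` on `[0, M]` for `0 < M ≤ π`. -/
lemma sin_concave_lower_bound {M x : ℝ} (hM : 0 < M) (hMπ : M ≤ π)
    (hx0 : 0 ≤ x) (hxM : x ≤ M) : (Real.sin M / M) * x ≤ Real.sin x := by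
  have hcc := strictConcaveOn_sin_Icc.concaveOn
  have hxa : 0 ≤ 1 - x / M := by
    have : x / M ≤ 1 := (div_le_one hM).2 hxM
    linarith
  have hxb : 0 ≤ x / M := by positivity
  have h := hcc.2 (x := 0) (y := M) ⟨le_rfl, Real.pi_pos.le⟩ ⟨hM.le, hMπ⟩
    hxa hxb (by ring)
  have hxe : (1 - x / M) • (0:ℝ) + (x / M) • M = x := by
    field_simp
    simp only [smul_eq_mul, mul_zero, zero_add]; exact div_mul_cancel₀ x hM.ne'
  rw [hxe] at h
  have : (1 - x / M) • Real.sin 0 + (x / M) • Real.sin M = (Real.sin M / M) * x := by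
    rw [Real.sin_zero]; simp only [smul_eq_mul, mul_zero, zero_add]; ring
  linarith [this ▸ h]

set_option maxHeartbeats 1000000 in
theorem energy_lower_bound (b : ℝ) (hb : 0 < b) (hb1 : b < 1)
    (u u' : ℝ → ℝ) (E : ℝ)
    (hderiv : ∀ r ∈ Set.Icc (0:ℝ) 1, HasDerivAt u (u' r) r)
    (hu0 : u 0 = 0) (hu1 : u 1 = 0)
    (hE : E = (1/2) * ∫ r in (0:ℝ)..1,
      ((u' r)^2 + (Real.sin (u r))^2 / r^2) * r)
    (hintH : IntervalIntegrable (fun r => ((u' r)^2 + (u r)^2 / r^2) * r)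
      MeasureTheory.volume 0 1)
    (hintE : IntervalIntegrable
      (fun r => ((u' r)^2 + (Real.sin (u r))^2 / r^2) * r)
      MeasureTheory.volume 0 1)
    (hEb : E ≤ 2 * b) :
    (b * (1 - b)^2 / (2 * (Real.arcsin (Real.sqrt b))^2)) *
      (∫ r in (0:ℝ)..1, ((u' r)^2 + (u r)^2 / r^2) * r) ≤ E := by
  set e : ℝ → ℝ := fun r => ((u' r)^2 + (Real.sin (u r))^2 / r^2) * r with he
  set h : ℝ → ℝ := fun r => ((u' r)^2 + (u r)^2 / r^2) * r with hh
  set θ := Real.arcsin (Real.sqrt b) with hθ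
  have hsb0 : (0:ℝ) < Real.sqrt b := Real.sqrt_pos.2 hb
  have hsb1 : Real.sqrt b < 1 := by
    have := Real.sqrt_lt_sqrt hb.le hb1
    rwa [Real.sqrt_one] at this
  have hθ0 : 0 < θ := Real.arcsin_pos.2 hsb0
  have hθπ : θ < π / 2 := Real.arcsin_lt_pi_div_two.2 hsb1
  set M := 2 * θ with hM
  have hM0 : 0 < M := by positivity
  have hMπ : M < π := by rw [hM]; linarith
  have hsinθ : Real.sin θ = Real.sqrt b := Real.sin_arcsin (by linarith [hsb0.le]) hsb1.le
  have hcosθ : Real.cos θ = Real.sqrt (1 - b) := by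
    rw [hθ, Real.cos_arcsin, Real.sq_sqrt hb.le]
  have hsinM : Real.sin M = 2 * Real.sqrt b * Real.sqrt (1 - b) := by
    rw [hM, Real.sin_two_mul, hsinθ, hcosθ]
  -- continuity of u on [0,1]
  have hucont : ContinuousOn u (Set.Icc 0 1) := fun r hr =>
    (hderiv r hr).continuousAt.continuousWithinAt
  -- nonnegativity of e
  have he_nonneg : ∀ s ∈ Set.Icc (0:ℝ) 1, 0 ≤ e s := fun s hs =>
    mul_nonneg (by positivity) hs.1
  have hh_nonneg : ∀ s ∈ Set.Icc (0:ℝ) 1, 0 ≤ h s := fun s hs =>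
    mul_nonneg (by positivity) hs.1
  -- pointwise AM-GM bound
  have hptb : ∀ s : ℝ, 0 < s → |(-Real.sin (u s)) * u' s| ≤ (1/2) * e s := by
    intro s hs
    have key : |(-Real.sin (u s)) * u' s| ≤ ((u' s)^2 * s^2 + (Real.sin (u s))^2) / (2 * s) := by
      rw [le_div_iff₀ (by positivity), abs_mul, abs_neg]
      nlinarith [sq_nonneg (|u' s| * s - |Real.sin (u s)|), sq_abs (u' s),
        sq_abs (Real.sin (u s)), abs_nonneg (u' s), abs_nonneg (Real.sin (u s))]
    have heq : (1/2) * e s = ((u' s)^2 * s^2 + (Real.sin (u s))^2) / (2 * s) := by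
      rw [he]; field_simp
    linarith
  -- Step B : 1 - cos (u r) ≤ 2 b for all r ∈ [0,1]
  have hcosb : ∀ r ∈ Set.Icc (0:ℝ) 1, 1 - Real.cos (u r) ≤ 2 * b := by
    intro r hr
    rcases eq_or_lt_of_le hr.1 with h0 | h0
    · rw [← h0, hu0, Real.cos_zero]; linarith
    · have hsub : Set.uIcc r 1 ⊆ Set.Icc (0:ℝ) 1 := by
        rw [Set.uIcc_of_le hr.2]
        exact Set.Icc_subset_Icc h0.le le_rfl
      have hderiv2 : ∀ x ∈ Set.uIcc r 1,
          HasDerivAt (fun s => Real.cos (u s)) (-Real.sin (u x) * u' x) x :=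
        fun x hx => (hderiv x (hsub hx)).cos
      have hIe_r1 : IntervalIntegrable e MeasureTheory.volume r 1 :=
        hintE.mono_set (by
          rw [Set.uIcc_of_le hr.2, Set.uIcc_of_le zero_le_one]
          exact Set.Icc_subset_Icc h0.le le_rfl)
      have hIe_0r : IntervalIntegrable e MeasureTheory.volume 0 r :=
        hintE.mono_set (by
          rw [Set.uIcc_of_le hr.1, Set.uIcc_of_le zero_le_one]
          exact Set.Icc_subset_Icc le_rfl hr.2)
      -- measurability of the derivative integrand
      have hmeas : MeasureTheory.AEStronglyMeasurable
          (fun s => -Real.sin (u s) * u' s)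
          (MeasureTheory.volume.restrict (Set.uIoc r 1)) := by
        have h1 : ContinuousOn (fun s => -Real.sin (u s)) (Set.uIoc r 1) := by
          apply (Real.continuous_sin.comp_continuousOn
            (hucont.mono (Set.uIoc_subset_uIcc.trans hsub))).neg
        have h2 : MeasureTheory.AEStronglyMeasurable (deriv u)
            (MeasureTheory.volume.restrict (Set.uIoc r 1)) :=
          (measurable_deriv u).aestronglyMeasurable.restrict
        have h3 : MeasureTheory.AEStronglyMeasurable
            (fun s => -Real.sin (u s) * deriv u s)
            (MeasureTheory.volume.restrict (Set.uIoc r 1)) :=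
          (h1.aestronglyMeasurable measurableSet_uIoc).mul h2
        apply h3.congr
        exact (MeasureTheory.ae_restrict_iff' measurableSet_uIoc).2
          (Filter.Eventually.of_forall fun s hs => by
            show -Real.sin (u s) * deriv u s = -Real.sin (u s) * u' s
            rw [(hderiv s (hsub (Set.uIoc_subset_uIcc hs))).deriv])
      have hIf' : IntervalIntegrable (fun s => -Real.sin (u s) * u' s)
          MeasureTheory.volume r 1 := by
        apply (hIe_r1.const_mul (1/2)).mono_fun hmeas
        rw [Filter.EventuallyLE, MeasureTheory.ae_restrict_iff' measurableSet_uIoc]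
        filter_upwards with s hs
        rw [Set.uIoc_of_le hr.2] at hs
        have hs0 : 0 < s := lt_of_le_of_lt h0.le hs.1
        have := hptb s hs0
        have hes : 0 ≤ e s := he_nonneg s ⟨hs0.le, hs.2⟩
        simp only [norm_eq_abs]
        calc |(-Real.sin (u s)) * u' s| ≤ (1/2) * e s := this
          _ ≤ |(1/2) * e s| := le_abs_self _
      have hftc := integral_eq_sub_of_hasDerivAt hderiv2 hIf'
      rw [hu1, Real.cos_zero] at hftc
      -- bound the integral
      have habs : |∫ s in r..1, -Real.sin (u s) * u' s| ≤
          ∫ s in r..1, (1/2) * e s := by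
        calc |∫ s in r..1, -Real.sin (u s) * u' s|
            ≤ ∫ s in r..1, |(-Real.sin (u s)) * u' s| :=
              abs_integral_le_integral_abs hr.2
          _ ≤ ∫ s in r..1, (1/2) * e s := by
              apply integral_mono_on hr.2 hIf'.abs (hIe_r1.const_mul (1/2))
              intro s hs
              exact hptb s (lt_of_lt_of_le h0 hs.1)
      have hsplit : (∫ s in (0:ℝ)..r, e s) + ∫ s in r..1, e s = ∫ s in (0:ℝ)..1, e s :=
        integral_add_adjacent_intervals hIe_0r hIe_r1
      have h0r : 0 ≤ ∫ s in (0:ℝ)..r, e s :=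
        integral_nonneg hr.1 (fun s hs => he_nonneg s ⟨hs.1, le_trans hs.2 hr.2⟩)
      have hhalf : (∫ s in r..1, (1/2) * e s) = (1/2) * ∫ s in r..1, e s :=
        integral_const_mul _ _
      have hE' : (1/2) * (∫ s in r..1, e s) ≤ E := by
        rw [hE]; rw [← he] at *
        have : (∫ s in r..1, e s) ≤ ∫ s in (0:ℝ)..1, e s := by linarith
        linarith
      have h1c : 1 - Real.cos (u r) ≤ |∫ s in r..1, -Real.sin (u s) * u' s| := by
        rw [hftc]; exact le_abs_self _
      linarith
  -- Step C : sup bound |u r| ≤ M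
  have hband : ∀ c : ℝ, M < c → c ≤ π → 2 * b < 1 - Real.cos c := by
    intro c h1 h2
    have hs : Real.sin θ < Real.sin (c / 2) :=
      Real.sin_lt_sin_of_lt_of_le_pi_div_two (by linarith) (by linarith) (by linarith)
    rw [hsinθ] at hs
    have hb' : b < (Real.sin (c/2))^2 := by
      nlinarith [Real.sq_sqrt hb.le, Real.sqrt_nonneg b]
    have hcc : Real.cos c = 1 - 2 * (Real.sin (c/2))^2 := by
      have h2m := Real.cos_two_mul (c/2)
      have h2s : Real.cos (c/2)^2 = 1 - Real.sin (c/2)^2 := Real.cos_sq' (c/2)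
      rw [show 2 * (c/2) = c by ring] at h2m
      linarith
    linarith
  have hsup : ∀ r ∈ Set.Icc (0:ℝ) 1, |u r| ≤ M := by
    intro r hr
    by_contra hcon
    push_neg at hcon
    have hsub : Set.uIcc r 1 ⊆ Set.Icc (0:ℝ) 1 := by
      rw [Set.uIcc_of_le hr.2]
      exact Set.Icc_subset_Icc hr.1 le_rfl
    have hcont : ContinuousOn u (Set.uIcc r 1) := hucont.mono hsub
    set c := min |u r| π with hc
    have hcM : M < c := lt_min hcon hMπ
    have hcπ : c ≤ π := min_le_right _ _
    have hc0 : 0 < c := lt_trans hM0 hcM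
    have hex : ∃ s ∈ Set.uIcc r 1, |u s| = c := by
      rcases le_or_gt 0 (u r) with hpos | hneg
      · have hmem : c ∈ Set.uIcc (u r) (u 1) := by
          rw [hu1]
          apply Set.mem_uIcc.2 (Or.inr ⟨hc0.le, ?_⟩)
          calc c ≤ |u r| := min_le_left _ _
            _ = u r := abs_of_nonneg hpos
        obtain ⟨s, hs, hus⟩ := intermediate_value_uIcc hcont hmem
        exact ⟨s, hs, by rw [hus, abs_of_nonneg hc0.le]⟩
      · have hmem : -c ∈ Set.uIcc (u r) (u 1) := by
          rw [hu1]
          apply Set.mem_uIcc.2 (Or.inl ⟨?_, by linarith⟩)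
          have : c ≤ -u r := by
            calc c ≤ |u r| := min_le_left _ _
              _ = -u r := abs_of_neg hneg
          linarith
        obtain ⟨s, hs, hus⟩ := intermediate_value_uIcc hcont hmem
        refine ⟨s, hs, by rw [hus, abs_neg, abs_of_nonneg hc0.le]⟩
    obtain ⟨s, hsmem, hus⟩ := hex
    have hsIcc : s ∈ Set.Icc (0:ℝ) 1 := hsub hsmem
    have hB := hcosb s hsIcc
    have hcos : Real.cos (u s) = Real.cos c := by
      rcases (abs_eq hc0.le).1 hus with h1 | h1
      · rw [h1]
      · rw [h1, Real.cos_neg]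
    have := hband c hcM hcπ
    rw [hcos] at hB
    linarith
  -- Step D : pointwise comparison
  set α := Real.sin M / M with hα
  have hsinM0 : 0 ≤ Real.sin M := Real.sin_nonneg_of_nonneg_of_le_pi hM0.le hMπ.le
  have hα0 : 0 ≤ α := div_nonneg hsinM0 hM0.le
  have hα1 : α ≤ 1 := (div_le_one hM0).2 (Real.sin_le hM0.le)
  have hpt : ∀ r ∈ Set.Icc (0:ℝ) 1, α^2 * h r ≤ e r := by
    intro r hr
    rcases eq_or_lt_of_le hr.1 with h0 | h0
    · simp [hh, he, ← h0]
    · have huM := hsup r hr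
      have habs : α * |u r| ≤ |Real.sin (u r)| := by
        have hconc : α * |u r| ≤ Real.sin |u r| :=
          sin_concave_lower_bound hM0 hMπ.le (abs_nonneg _) huM
        have : Real.sin |u r| = |Real.sin (u r)| := by
          rcases le_or_gt 0 (u r) with hp | hn
          · rw [abs_of_nonneg hp, abs_of_nonneg
              (Real.sin_nonneg_of_nonneg_of_le_pi hp
                (le_trans ((abs_of_nonneg hp) ▸ huM) hMπ.le))]
          · have h1 : -π ≤ u r := by
              have := (abs_le.1 huM).1; linarith
            rw [abs_of_neg hn, Real.sin_neg, abs_of_nonpos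
              (Real.sin_nonpos_of_nonpos_of_neg_pi_le hn.le h1)]
        linarith [this ▸ hconc]
      have h2 : α^2 * (u r)^2 ≤ (Real.sin (u r))^2 := by
        have hq := mul_self_le_mul_self (mul_nonneg hα0 (abs_nonneg (u r))) habs
        nlinarith [hq, sq_abs (u r), sq_abs (Real.sin (u r))]
      have hinv : (0:ℝ) ≤ ((r:ℝ)^2)⁻¹ := by positivity
      have hα2' : α^2 ≤ 1 := by nlinarith [hα0, hα1]
      have hA : α^2 * (u' r)^2 ≤ (u' r)^2 := by nlinarith [sq_nonneg (u' r), hα2']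
      have hB : α^2 * (u r)^2 * (r^2)⁻¹ ≤ (Real.sin (u r))^2 * (r^2)⁻¹ :=
        mul_le_mul_of_nonneg_right h2 hinv
      calc α^2 * h r = (α^2 * (u' r)^2 + α^2 * (u r)^2 * (r^2)⁻¹) * r := by
            rw [hh]; field_simp
        _ ≤ ((u' r)^2 + (Real.sin (u r))^2 * (r^2)⁻¹) * r :=
            mul_le_mul_of_nonneg_right (add_le_add hA hB) h0.le
        _ = e r := by rw [he]; field_simp
  -- integral comparison
  have hImono : α^2 * (∫ r in (0:ℝ)..1, h r) ≤ ∫ r in (0:ℝ)..1, e r := by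
    rw [← integral_const_mul]
    exact integral_mono_on zero_le_one (hintH.const_mul (α^2)) hintE hpt
  have hI0 : 0 ≤ ∫ r in (0:ℝ)..1, h r := integral_nonneg zero_le_one hh_nonneg
  -- constant comparison
  have hα2 : α^2 = b * (1 - b) / θ^2 := by
    rw [hα, div_pow, hsinM]
    rw [show (2 * Real.sqrt b * Real.sqrt (1-b))^2
        = 4 * (Real.sqrt b ^ 2) * (Real.sqrt (1-b) ^ 2) by ring,
      Real.sq_sqrt hb.le, Real.sq_sqrt (by linarith : (0:ℝ) ≤ 1 - b), hM]
    rw [show (2 * θ)^2 = 4 * θ^2 by ring]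
    field_simp
  have hC : b * (1 - b)^2 / (2 * θ^2) ≤ α^2 / 2 := by
    rw [hα2, div_div, show θ^2 * 2 = 2 * θ^2 by ring]
    refine (div_le_div_iff_of_pos_right (by positivity)).2 ?_
    have key : b * (1 - b) - b * (1 - b)^2 = b * (1 - b) * b := by ring
    nlinarith [mul_nonneg (mul_nonneg hb.le (by linarith : (0:ℝ) ≤ 1 - b)) hb.le]
  calc b * (1 - b)^2 / (2 * θ^2) * (∫ r in (0:ℝ)..1, h r)
      ≤ (α^2 / 2) * (∫ r in (0:ℝ)..1, h r) := mul_le_mul_of_nonneg_right hC hI0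
    _ = (1/2) * (α^2 * (∫ r in (0:ℝ)..1, h r)) := by ring
    _ ≤ (1/2) * (∫ r in (0:ℝ)..1, e r) := by linarith
    _ = E := hE.symm
end

section
/- Convexity control of the nonlinear term: for u, w : [0,1] → ℝ in H^1_{r,0} (with all integrals finite), ∫_0^1 f(u(r)) (w(r) - u(r)) / r dr ≤ (1/2)(‖w‖_{H^1_r}^2 - ‖u‖_{H^1_r}^2) + E(u) - E(w), where f(z) = z - (1/2) sin(2z), E(v) = (1/2)∫_0^1 (v'^2 + sin^2(v)/r^2) r dr and ‖v‖_{H^1_r}^2 = ∫_0^1 (v'^2 + v^2/r^2) r dr. -/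
open Real intervalIntegral

private lemma sin_lip (p q : ℝ) : |Real.sin p - Real.sin q| ≤ |p - q| := by
  rw [Real.sin_sub_sin]
  calc |2 * Real.sin ((p - q)/2) * Real.cos ((p + q)/2)|
      = 2 * |Real.sin ((p - q)/2)| * |Real.cos ((p + q)/2)| := by
        rw [abs_mul, abs_mul]; norm_num
    _ ≤ 2 * |(p - q)/2| * 1 := by
        apply mul_le_mul (by
          have := Real.abs_sin_le_abs (x := (p - q)/2)
          nlinarith [abs_nonneg ((p-q)/2)]) (Real.abs_cos_le_one _) (abs_nonneg _)
          (by positivity)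
    _ = |p - q| := by rw [abs_div]; simp; ring

private lemma fmono : Monotone (fun z : ℝ => z - Real.sin z * Real.cos z) := by
  intro x y hxy
  have h2 : |Real.sin (2*y) - Real.sin (2*x)| ≤ |2*y - 2*x| := sin_lip _ _
  have habs : Real.sin (2*y) - Real.sin (2*x) ≤ 2*y - 2*x := by
    have h3 : |2*y - 2*x| = 2*y - 2*x := abs_of_nonneg (by linarith)
    calc Real.sin (2*y) - Real.sin (2*x) ≤ |Real.sin (2*y) - Real.sin (2*x)| := le_abs_self _
      _ ≤ 2*y - 2*x := by rw [h3] at h2; exact h2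
  simp only
  rw [show Real.sin x * Real.cos x = (1/2) * Real.sin (2*x) by rw [Real.sin_two_mul]; ring,
      show Real.sin y * Real.cos y = (1/2) * Real.sin (2*y) by rw [Real.sin_two_mul]; ring]
  linarith

private lemma key (a b : ℝ) :
    (a - (1/2) * Real.sin (2*a)) * (b - a) ≤
      ((1/2) * b^2 - (1/2) * (Real.sin b)^2) - ((1/2) * a^2 - (1/2) * (Real.sin a)^2) := by
  set F : ℝ → ℝ := fun z => (1/2) * z^2 - (1/2) * (Real.sin z)^2 with hFdef
  set f : ℝ → ℝ := fun z => z - Real.sin z * Real.cos z with hfdef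
  have hF : ∀ z : ℝ, HasDerivAt F (f z) z := by
    intro z
    have h1 : HasDerivAt (fun z : ℝ => z^2) (2*z) z := by
      simpa using (hasDerivAt_id z).fun_pow 2
    have h2 : HasDerivAt (fun z : ℝ => (Real.sin z)^2) (2 * Real.sin z * Real.cos z) z := by
      simpa [mul_comm, mul_assoc] using ((Real.hasDerivAt_sin z).fun_pow 2)
    have : HasDerivAt F ((1/2:ℝ) * (2*z) - (1/2:ℝ) * (2 * Real.sin z * Real.cos z)) z := ((h1.const_mul (1/2:ℝ)).fun_sub (h2.const_mul (1/2:ℝ)))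
    convert this using 1
    simp [hfdef]; ring
  have hfa : (a - (1/2) * Real.sin (2*a)) = f a := by
    simp [hfdef, Real.sin_two_mul]; ring
  rw [hfa]
  have hgoal : f a * (b - a) ≤ F b - F a := by
    rcases lt_trichotomy a b with hab | hab | hab
    · obtain ⟨c, hc, hc2⟩ := exists_hasDerivAt_eq_slope F f hab
        (fun x _ => (hF x).continuousAt.continuousWithinAt) (fun x _ => hF x)
      have hne : b - a ≠ 0 := sub_ne_zero.mpr hab.ne'
      have heq : F b - F a = f c * (b - a) := by
        rw [hc2, div_mul_cancel₀ _ hne]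
      rw [heq]
      have := fmono hc.1.le
      nlinarith [this, sub_pos.mpr hab]
    · subst hab; simp
    · obtain ⟨c, hc, hc2⟩ := exists_hasDerivAt_eq_slope F f hab
        (fun x _ => (hF x).continuousAt.continuousWithinAt) (fun x _ => hF x)
      have hne : a - b ≠ 0 := sub_ne_zero.mpr hab.ne'
      have heq : F a - F b = f c * (a - b) := by
        rw [hc2, div_mul_cancel₀ _ hne]
      have hcb : f c ≤ f a := fmono hc.2.le
      nlinarith [heq, sub_pos.mpr hab]
  calc f a * (b - a) ≤ F b - F a := hgoal
    _ = _ := by simp [hFdef]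


theorem convexity_control (u u' w w' : ℝ → ℝ)
    (hderivu : ∀ r ∈ Set.Icc (0:ℝ) 1, HasDerivAt u (u' r) r)
    (hderivw : ∀ r ∈ Set.Icc (0:ℝ) 1, HasDerivAt w (w' r) r)
    (hu0 : u 0 = 0) (hu1 : u 1 = 0) (hw0 : w 0 = 0) (hw1 : w 1 = 0)
    (hintHu : IntervalIntegrable (fun r => ((u' r)^2 + (u r)^2 / r^2) * r)
      MeasureTheory.volume 0 1)
    (hintHw : IntervalIntegrable (fun r => ((w' r)^2 + (w r)^2 / r^2) * r)
      MeasureTheory.volume 0 1)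
    (hintEu : IntervalIntegrable
      (fun r => ((u' r)^2 + (Real.sin (u r))^2 / r^2) * r)
      MeasureTheory.volume 0 1)
    (hintEw : IntervalIntegrable
      (fun r => ((w' r)^2 + (Real.sin (w r))^2 / r^2) * r)
      MeasureTheory.volume 0 1)
    (hintf : IntervalIntegrable
      (fun r => (u r - (1/2) * Real.sin (2 * u r)) * (w r - u r) / r)
      MeasureTheory.volume 0 1) :
    (∫ r in (0:ℝ)..1, (u r - (1/2) * Real.sin (2 * u r)) * (w r - u r) / r) ≤
      (1/2) * ((∫ r in (0:ℝ)..1, ((w' r)^2 + (w r)^2 / r^2) * r) -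
               (∫ r in (0:ℝ)..1, ((u' r)^2 + (u r)^2 / r^2) * r)) +
      ((1/2) * (∫ r in (0:ℝ)..1, ((u' r)^2 + (Real.sin (u r))^2 / r^2) * r) -
       (1/2) * (∫ r in (0:ℝ)..1, ((w' r)^2 + (Real.sin (w r))^2 / r^2) * r)) := by
  set g : ℝ → ℝ := fun r => (1/2) *
      (((((w' r)^2 + (w r)^2 / r^2) * r) - (((u' r)^2 + (u r)^2 / r^2) * r)) +
       ((((u' r)^2 + (Real.sin (u r))^2 / r^2) * r) -
        (((w' r)^2 + (Real.sin (w r))^2 / r^2) * r))) with hgdef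
  have hgint : IntervalIntegrable g MeasureTheory.volume 0 1 := by
    exact ((hintHw.sub hintHu).add (hintEu.sub hintEw)).const_mul (1/2)
  have hpt : ∀ r ∈ Set.Icc (0:ℝ) 1,
      (u r - (1/2) * Real.sin (2 * u r)) * (w r - u r) / r ≤ g r := by
    intro r hr
    rcases eq_or_lt_of_le hr.1 with h0 | h0
    · rw [← h0]
      simp [hgdef]
    · have hr2 : (r:ℝ)^2 ≠ 0 := pow_ne_zero 2 h0.ne'
      have hgr : g r = (((1/2) * (w r)^2 - (1/2) * (Real.sin (w r))^2) -
          ((1/2) * (u r)^2 - (1/2) * (Real.sin (u r))^2)) / r := by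
        rw [hgdef]
        field_simp
        ring
      rw [hgr, div_le_div_iff_of_pos_right h0]
      exact key (u r) (w r)
  calc (∫ r in (0:ℝ)..1, (u r - (1/2) * Real.sin (2 * u r)) * (w r - u r) / r)
      ≤ ∫ r in (0:ℝ)..1, g r :=
        intervalIntegral.integral_mono_on (by norm_num) hintf hgint hpt
    _ = _ := by
        rw [hgdef]
        simp only
        rw [intervalIntegral.integral_const_mul,
          intervalIntegral.integral_add (hintHw.sub hintHu) (hintEu.sub hintEw),
          intervalIntegral.integral_sub hintHw hintHu,
          intervalIntegral.integral_sub hintEu hintEw]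
        ring
end
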